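/- Consider the two Markov chains on V = {a,b,c} with edges E = {(a,b),(a,c),(b,c),(c,b)}: both jump between b and c at rate 1, the first jumps from a to b at rate 2 with R(a,c)=0, the second jumps from a to c at rate 2 with R(a,b)=0. Then for every probability measure μ and every flow J on E, the measure-current rate functionals coincide: I(μ,J) = I'(μ,J). In particular, a flow J is divergence-free (for either chain's edge set viewed inside E) iff J(a,b)=J(a,c)=0 and J(b,c)=J(c,b), and in that case I(μ,J) = 2μ_a + Φ(J(b,c),μ_b) + Φ(J(b,c),μ_c). -/
import Mathlib


noncomputable def Phi (q p : ℝ) : EReal :=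
  if q = 0 then (p : EReal)
  else if p = 0 then ⊤
  else ((q * Real.log (q / p) - (q - p) : ℝ) : EReal)

open scoped Classical in
/-- Measure-current (BFG) rate functional of the chain with rates `R`:
`∑_{(x,y) : R(x,y)>0} Φ(J(x,y), μ(x)R(x,y))` if `J` is divergence-free and
supported on the edge set of `R`, and `+∞` otherwise. -/
noncomputable def BFG {V : Type*} [Fintype V]
    (R : V → V → ℝ) (μ : V → ℝ) (J : V → V → ℝ) : EReal :=
  if (∀ x, ∑ y, J x y = ∑ y, J y x) ∧ (∀ x y, J x y ≠ 0 → 0 < R x y) then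
    ∑ x, ∑ y, (if 0 < R x y then Phi (J x y) (μ x * R x y) else 0)
  else ⊤

/-- First chain on `{a,b,c} = {0,1,2}`: `b ↔ c` at rate 1, `a → b` at rate 2. -/
noncomputable def R1 : Fin 3 → Fin 3 → ℝ := fun x y =>
  if (x, y) = (1, 2) ∨ (x, y) = (2, 1) then 1 else if (x, y) = (0, 1) then 2 else 0

/-- Second chain: `b ↔ c` at rate 1, `a → c` at rate 2. -/
noncomputable def R2 : Fin 3 → Fin 3 → ℝ := fun x y =>
  if (x, y) = (1, 2) ∨ (x, y) = (2, 1) then 1 else if (x, y) = (0, 2) then 2 else 0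

theorem stmt_16 (μ : Fin 3 → ℝ) (hμ0 : ∀ x, 0 ≤ μ x) (hμ1 : ∑ x, μ x = 1)
    (J : Fin 3 → Fin 3 → ℝ) (hJ0 : ∀ x y, 0 ≤ J x y)
    -- `J` is a flow on `E = {(a,b),(a,c),(b,c),(c,b)}`
    (hJE : ∀ x y : Fin 3, J x y ≠ 0 →
      (x, y) = (0, 1) ∨ (x, y) = (0, 2) ∨ (x, y) = (1, 2) ∨ (x, y) = (2, 1)) :
    -- the two rate functionals coincide
    BFG R1 μ J = BFG R2 μ J ∧
    -- `J` is divergence-free and supported on the edge set of `R1` iff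
    -- `J(a,b) = J(a,c) = 0` and `J(b,c) = J(c,b)`
    (((∀ x, ∑ y, J x y = ∑ y, J y x) ∧ (∀ x y, J x y ≠ 0 → 0 < R1 x y)) ↔
      (J 0 1 = 0 ∧ J 0 2 = 0 ∧ J 1 2 = J 2 1)) ∧
    -- and in that case the common value is `2 μ_a + Φ(J_{bc}, μ_b) + Φ(J_{bc}, μ_c)`
    ((J 0 1 = 0 ∧ J 0 2 = 0 ∧ J 1 2 = J 2 1) →
      BFG R1 μ J
        = ((2 * μ 0 : ℝ) : EReal) + Phi (J 1 2) (μ 1) + Phi (J 1 2) (μ 2)) := by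
  classical
  have h00 : J 0 0 = 0 := by
    by_contra h; rcases hJE 0 0 h with h'|h'|h'|h' <;> exact absurd h' (by decide)
  have h10 : J 1 0 = 0 := by
    by_contra h; rcases hJE 1 0 h with h'|h'|h'|h' <;> exact absurd h' (by decide)
  have h11 : J 1 1 = 0 := by
    by_contra h; rcases hJE 1 1 h with h'|h'|h'|h' <;> exact absurd h' (by decide)
  have h20 : J 2 0 = 0 := by
    by_contra h; rcases hJE 2 0 h with h'|h'|h'|h' <;> exact absurd h' (by decide)
  have h22 : J 2 2 = 0 := by
    by_contra h; rcases hJE 2 2 h with h'|h'|h'|h' <;> exact absurd h' (by decide)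
  -- the divergence-free + support condition for R1
  have iff1 : ((∀ x, ∑ y, J x y = ∑ y, J y x) ∧ (∀ x y, J x y ≠ 0 → 0 < R1 x y)) ↔
      (J 0 1 = 0 ∧ J 0 2 = 0 ∧ J 1 2 = J 2 1) := by
    constructor
    · rintro ⟨hdiv, -⟩
      have h0 := hdiv 0
      have h1 := hdiv 1
      simp only [Fin.sum_univ_three, h00, h10, h11, h20, h22, zero_add, add_zero] at h0 h1
      have hJ01 : J 0 1 = 0 := by nlinarith [hJ0 0 1, hJ0 0 2]
      have hJ02 : J 0 2 = 0 := by nlinarith [hJ0 0 1, hJ0 0 2]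
      exact ⟨hJ01, hJ02, by rw [hJ01] at h1; linarith⟩
    · rintro ⟨e1, e2, e3⟩
      constructor
      · intro x
        fin_cases x <;>
          simp [Fin.sum_univ_three, h00, h10, h11, h20, h22, e1, e2, e3]
      · intro x y hne
        rcases hJE x y hne with h'|h'|h'|h'
        · rw [Prod.mk.injEq] at h'; obtain ⟨rfl, rfl⟩ := h'; exact absurd e1 hne
        · rw [Prod.mk.injEq] at h'; obtain ⟨rfl, rfl⟩ := h'; exact absurd e2 hne
        · rw [Prod.mk.injEq] at h'; obtain ⟨rfl, rfl⟩ := h'; norm_num [R1, Prod.ext_iff, Fin.ext_iff]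
        · rw [Prod.mk.injEq] at h'; obtain ⟨rfl, rfl⟩ := h'; norm_num [R1, Prod.ext_iff, Fin.ext_iff]
  have iff2 : ((∀ x, ∑ y, J x y = ∑ y, J y x) ∧ (∀ x y, J x y ≠ 0 → 0 < R2 x y)) ↔
      (J 0 1 = 0 ∧ J 0 2 = 0 ∧ J 1 2 = J 2 1) := by
    constructor
    · rintro ⟨hdiv, -⟩
      have h0 := hdiv 0
      have h1 := hdiv 1
      simp only [Fin.sum_univ_three, h00, h10, h11, h20, h22, zero_add, add_zero] at h0 h1
      have hJ01 : J 0 1 = 0 := by nlinarith [hJ0 0 1, hJ0 0 2]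
      have hJ02 : J 0 2 = 0 := by nlinarith [hJ0 0 1, hJ0 0 2]
      exact ⟨hJ01, hJ02, by rw [hJ01] at h1; linarith⟩
    · rintro ⟨e1, e2, e3⟩
      constructor
      · intro x
        fin_cases x <;>
          simp [Fin.sum_univ_three, h00, h10, h11, h20, h22, e1, e2, e3]
      · intro x y hne
        rcases hJE x y hne with h'|h'|h'|h'
        · rw [Prod.mk.injEq] at h'; obtain ⟨rfl, rfl⟩ := h'; exact absurd e1 hne
        · rw [Prod.mk.injEq] at h'; obtain ⟨rfl, rfl⟩ := h'; exact absurd e2 hne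
        · rw [Prod.mk.injEq] at h'; obtain ⟨rfl, rfl⟩ := h'; norm_num [R2, Prod.ext_iff, Fin.ext_iff]
        · rw [Prod.mk.injEq] at h'; obtain ⟨rfl, rfl⟩ := h'; norm_num [R2, Prod.ext_iff, Fin.ext_iff]
  have c00 : ¬ (0:ℝ) < R1 0 0 := by norm_num [R1, Prod.ext_iff, Fin.ext_iff]
  have c01 : (0:ℝ) < R1 0 1 := by norm_num [R1, Prod.ext_iff, Fin.ext_iff]
  have c02 : ¬ (0:ℝ) < R1 0 2 := by norm_num [R1, Prod.ext_iff, Fin.ext_iff]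
  have c10 : ¬ (0:ℝ) < R1 1 0 := by norm_num [R1, Prod.ext_iff, Fin.ext_iff]
  have c11 : ¬ (0:ℝ) < R1 1 1 := by norm_num [R1, Prod.ext_iff, Fin.ext_iff]
  have c12 : (0:ℝ) < R1 1 2 := by norm_num [R1, Prod.ext_iff, Fin.ext_iff]
  have c20 : ¬ (0:ℝ) < R1 2 0 := by norm_num [R1, Prod.ext_iff, Fin.ext_iff]
  have c21 : (0:ℝ) < R1 2 1 := by norm_num [R1, Prod.ext_iff, Fin.ext_iff]
  have c22 : ¬ (0:ℝ) < R1 2 2 := by norm_num [R1, Prod.ext_iff, Fin.ext_iff]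
  have v01 : R1 0 1 = 2 := by norm_num [R1, Prod.ext_iff, Fin.ext_iff]
  have v12 : R1 1 2 = 1 := by norm_num [R1, Prod.ext_iff, Fin.ext_iff]
  have v21 : R1 2 1 = 1 := by norm_num [R1, Prod.ext_iff, Fin.ext_iff]
  have d00 : ¬ (0:ℝ) < R2 0 0 := by norm_num [R2, Prod.ext_iff, Fin.ext_iff]
  have d01 : ¬ (0:ℝ) < R2 0 1 := by norm_num [R2, Prod.ext_iff, Fin.ext_iff]
  have d02 : (0:ℝ) < R2 0 2 := by norm_num [R2, Prod.ext_iff, Fin.ext_iff]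
  have d10 : ¬ (0:ℝ) < R2 1 0 := by norm_num [R2, Prod.ext_iff, Fin.ext_iff]
  have d11 : ¬ (0:ℝ) < R2 1 1 := by norm_num [R2, Prod.ext_iff, Fin.ext_iff]
  have d12 : (0:ℝ) < R2 1 2 := by norm_num [R2, Prod.ext_iff, Fin.ext_iff]
  have d20 : ¬ (0:ℝ) < R2 2 0 := by norm_num [R2, Prod.ext_iff, Fin.ext_iff]
  have d21 : (0:ℝ) < R2 2 1 := by norm_num [R2, Prod.ext_iff, Fin.ext_iff]
  have d22 : ¬ (0:ℝ) < R2 2 2 := by norm_num [R2, Prod.ext_iff, Fin.ext_iff]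
  have w02 : R2 0 2 = 2 := by norm_num [R2, Prod.ext_iff, Fin.ext_iff]
  have w12 : R2 1 2 = 1 := by norm_num [R2, Prod.ext_iff, Fin.ext_iff]
  have w21 : R2 2 1 = 1 := by norm_num [R2, Prod.ext_iff, Fin.ext_iff]
  have hval1 : ∀ _ : (J 0 1 = 0 ∧ J 0 2 = 0 ∧ J 1 2 = J 2 1),
      BFG R1 μ J = ((2 * μ 0 : ℝ) : EReal) + Phi (J 1 2) (μ 1) + Phi (J 1 2) (μ 2) := by
    rintro hC
    rw [BFG, if_pos (iff1.mpr hC)]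
    obtain ⟨e1, e2, e3⟩ := hC
    simp only [Fin.sum_univ_three]
    rw [if_neg c00, if_pos c01, if_neg c02, if_neg c10, if_neg c11, if_pos c12,
      if_neg c20, if_pos c21, if_neg c22, v01, v12, v21, e1, ← e3, mul_one, mul_one]
    show (0 : EReal) + Phi 0 (μ 0 * 2) + 0 + (0 + 0 + Phi (J 1 2) (μ 1)) +
        (0 + Phi (J 1 2) (μ 2) + 0) = _
    rw [show Phi 0 (μ 0 * 2) = ((μ 0 * 2 : ℝ) : EReal) from if_pos rfl, mul_comm (μ 0) 2]
    abel
  refine ⟨?_, iff1, hval1⟩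
  by_cases hC : (J 0 1 = 0 ∧ J 0 2 = 0 ∧ J 1 2 = J 2 1)
  · rw [hval1 hC, BFG, if_pos (iff2.mpr hC)]
    obtain ⟨e1, e2, e3⟩ := hC
    simp only [Fin.sum_univ_three]
    rw [if_neg d00, if_neg d01, if_pos d02, if_neg d10, if_neg d11, if_pos d12,
      if_neg d20, if_pos d21, if_neg d22, w02, w12, w21, e2, ← e3, mul_one, mul_one]
    show ((2 * μ 0 : ℝ) : EReal) + Phi (J 1 2) (μ 1) + Phi (J 1 2) (μ 2) =
        (0 : EReal) + 0 + Phi 0 (μ 0 * 2) + (0 + 0 + Phi (J 1 2) (μ 1)) +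
        (0 + Phi (J 1 2) (μ 2) + 0)
    rw [show Phi 0 (μ 0 * 2) = ((μ 0 * 2 : ℝ) : EReal) from if_pos rfl, mul_comm (μ 0) 2]
    abel
  · rw [BFG, BFG, if_neg (fun h => hC (iff1.mp h)), if_neg (fun h => hC (iff2.mp h))]
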